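/- Suppose (A,J) is a strictly dense pair (S_{A,J[B]} > 1 for all A ⊊ B ⊆ V_J), where scalings are computed with p = n^{−(v_H−2)/(e_H−1)}, n > 1 and integers v_H, e_H ≥ 3. Suppose a,b are vertices of J with ab ∉ E_J and {a,b} ⊄ A, and let J′ = J ∪ {ab}. Then max over all B with A ⊆ B ⊆ V_{J′} of S_{B,J′} is strictly less than S_{A,J}; in fact it is at most n^{−1/(e_H−1)} S_{A,J}. -/

import Mathlib

open SimpleGraph Set

/-- `S_{A,Γ} = p^(e_Γ - e_{Γ[A]}) * n^(v_Γ - |A|)`, the extension scaling. -/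
noncomputable def scalingPair {V : Type*} [Fintype V] (n p : ℝ)
    (Γ : SimpleGraph V) (A : Set V) : ℝ :=
  p ^ (Γ.edgeSet.ncard - (Γ.induce A).edgeSet.ncard) *
    n ^ (Fintype.card V - A.ncard)

/-- `S_{A,Γ[B]}`, the extension scaling within the induced subgraph on `B`. -/
noncomputable def scalingInd {V : Type*} [Fintype V] (n p : ℝ)
    (Γ : SimpleGraph V) (A B : Set V) : ℝ :=
  p ^ ((Γ.induce B).edgeSet.ncard - (Γ.induce A).edgeSet.ncard) *
    n ^ (B.ncard - A.ncard)

section aux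
variable {V : Type*} [Fintype V]

lemma aux_induce_le (Γ : SimpleGraph V) (B : Set V) :
    (Γ.induce B).edgeSet.ncard ≤ Γ.edgeSet.ncard := by
  apply Set.ncard_le_ncard_of_injOn (Sym2.map (Subtype.val : B → V))
  · intro e he
    induction e using Sym2.ind with
    | _ x y => simpa using he
  · exact (Sym2.map.injective Subtype.val_injective).injOn

lemma aux_induce_mono (Γ : SimpleGraph V) {A B : Set V} (h : A ⊆ B) :
    (Γ.induce A).edgeSet.ncard ≤ (Γ.induce B).edgeSet.ncard := by
  apply Set.ncard_le_ncard_of_injOn (Sym2.map (Set.inclusion h))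
  · intro e he
    induction e using Sym2.ind with
    | _ x y => simpa using he
  · exact (Sym2.map.injective (Set.inclusion_injective h)).injOn

end aux

lemma aux_pos {n : ℝ} (hn : 1 < n) {x : ℝ} (h : 1 < n ^ x) : 0 < x := by
  rw [show (1:ℝ) = n ^ (0:ℝ) by simp] at h
  exact (Real.rpow_lt_rpow_left_iff hn).mp h

lemma aux_rpow {n : ℝ} (hn0 : 0 < n) (c : ℝ) (k m : ℕ) :
    (n ^ (-c)) ^ k * n ^ m = n ^ ((m : ℝ) - c * k) := by
  rw [← Real.rpow_natCast (n ^ (-c)) k, ← Real.rpow_natCast n m,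
    ← Real.rpow_mul hn0.le, ← Real.rpow_add hn0]
  congr 1
  ring

lemma aux_key {vH eH : ℕ} (he : 3 ≤ eH) {n : ℝ} (hn : 1 < n)
    (de dv : ℕ)
    (h : 1 < n ^ ((dv : ℝ) - ((vH : ℝ) - 2) / ((eH : ℝ) - 1) * de)) :
    1 / ((eH : ℝ) - 1) ≤ (dv : ℝ) - ((vH : ℝ) - 2) / ((eH : ℝ) - 1) * de := by
  have hd0 : (0:ℝ) < (eH : ℝ) - 1 := by
    have : (3:ℝ) ≤ eH := by exact_mod_cast he
    linarith
  have h0 := aux_pos hn h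
  set d : ℝ := (eH : ℝ) - 1 with hd
  set x : ℝ := (dv : ℝ) - ((vH : ℝ) - 2) / d * de with hx
  have hz : ((((eH:ℤ) - 1) * dv - ((vH:ℤ) - 2) * de : ℤ) : ℝ) = d * x := by
    rw [hx, hd]
    push_cast
    have hne : (eH:ℝ) - 1 ≠ 0 := by rw [← hd]; exact hd0.ne'
    field_simp
  have hzpos : (0:ℤ) < ((eH:ℤ) - 1) * dv - ((vH:ℤ) - 2) * de := by
    have : (0:ℝ) < d * x := mul_pos hd0 h0
    rw [← hz] at this
    exact_mod_cast this
  have h1 : (1:ℝ) ≤ d * x := by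
    rw [← hz]
    exact_mod_cast hzpos
  rw [div_le_iff₀ hd0]
  linarith [h1]

theorem stmt_9 {V : Type*} [Fintype V] [DecidableEq V] (vH eH : ℕ)
    (hv : 3 ≤ vH) (he : 3 ≤ eH) (n : ℝ) (hn : 1 < n) (p : ℝ)
    (hp : p = n ^ (-(((vH : ℝ) - 2) / ((eH : ℝ) - 1))))
    (J : SimpleGraph V) (A : Set V)
    (hdense : ∀ B : Set V, A ⊂ B → 1 < scalingInd n p J A B)
    (a b : V) (hab : a ≠ b) (hnadj : ¬ J.Adj a b)
    (hnotA : ¬ ({a, b} : Set V) ⊆ A) :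
    ∀ B : Set V, A ⊆ B →
      scalingPair n p (J ⊔ SimpleGraph.fromEdgeSet {s(a, b)}) B
          ≤ n ^ (-(1 : ℝ) / ((eH : ℝ) - 1)) * scalingPair n p J A ∧
      scalingPair n p (J ⊔ SimpleGraph.fromEdgeSet {s(a, b)}) B
          < scalingPair n p J A := by
  have hn0 : (0:ℝ) < n := lt_trans one_pos hn
  have hd0 : (0:ℝ) < (eH : ℝ) - 1 := by
    have : (3:ℝ) ≤ eH := by exact_mod_cast he
    linarith
  set c : ℝ := ((vH : ℝ) - 2) / ((eH : ℝ) - 1) with hc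
  have hc1 : 1 / ((eH : ℝ) - 1) ≤ c := by
    rw [hc]
    gcongr
    have : (3:ℝ) ≤ vH := by exact_mod_cast hv
    linarith
  intro B hAB
  set J' := J ⊔ SimpleGraph.fromEdgeSet {s(a,b)} with hJ'
  set v := Fintype.card V with hvv
  set eJ := J.edgeSet.ncard with heJdef
  set eA := (J.induce A).edgeSet.ncard with heAdef
  set eB := (J.induce B).edgeSet.ncard with heBdef
  have heAB : eA ≤ eB := aux_induce_mono J hAB
  have heBJ : eB ≤ eJ := aux_induce_le J B
  have heAJ : eA ≤ eJ := le_trans heAB heBJ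
  have hcAB : A.ncard ≤ B.ncard := Set.ncard_le_ncard hAB B.toFinite
  have hcBv : B.ncard ≤ v := by
    simpa [Set.ncard_univ, Nat.card_eq_fintype_card] using
      Set.ncard_le_ncard (Set.subset_univ B) Set.finite_univ
  have hcAv : A.ncard ≤ v := le_trans hcAB hcBv
  have habE : s(a,b) ∉ J.edgeSet := by simpa using hnadj
  have heJ' : J'.edgeSet.ncard = eJ + 1 := by
    have hnd : ¬ (s(a,b) : Sym2 V).IsDiag := by simpa using hab
    have hset : J'.edgeSet = insert s(a,b) J.edgeSet := by
      rw [hJ', edgeSet_sup, edgeSet_fromEdgeSet]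
      ext e
      simp only [Set.mem_union, Set.mem_diff, Set.mem_singleton_iff,
        Set.mem_insert_iff, Set.mem_setOf_eq]
      constructor
      · rintro (h | ⟨rfl, -⟩)
        exacts [Or.inr h, Or.inl rfl]
      · rintro (rfl | h)
        exacts [Or.inr ⟨rfl, hnd⟩, Or.inl h]
    rw [hset, Set.ncard_insert_of_notMem habE J.edgeSet.toFinite]
  -- key nonneg fact
  have hkey0 : 0 ≤ ((B.ncard - A.ncard : ℕ) : ℝ) - c * ((eB - eA : ℕ) : ℝ) := by
    rcases eq_or_ne A B with rfl | hne
    · simp [eB, eA]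
    · have hss : A ⊂ B := ⟨hAB, fun h => hne (le_antisymm hAB h)⟩
      have hh := hdense B hss
      rw [scalingInd, hp, ← heBdef, ← heAdef, aux_rpow hn0] at hh
      exact (aux_pos hn hh).le
  have hSpos : 0 < scalingPair n p J A := by
    rw [scalingPair, hp]
    positivity
  have hfrac : n ^ (-(1:ℝ) / ((eH : ℝ) - 1)) < 1 :=
    Real.rpow_lt_one_of_one_lt_of_neg hn (div_neg_of_neg_of_pos (by norm_num) hd0)
  suffices hmain : scalingPair n p J' B ≤ n ^ (-(1:ℝ) / ((eH : ℝ) - 1)) * scalingPair n p J A by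
    refine ⟨hmain, lt_of_le_of_lt hmain ?_⟩
    exact mul_lt_of_lt_one_left hSpos hfrac
  by_cases hmem : a ∈ B ∧ b ∈ B
  · -- edge ab lies inside B
    obtain ⟨ha, hb⟩ := hmem
    have hindJ' : (J'.induce B).edgeSet.ncard = eB + 1 := by
      have hnotmem : s((⟨a, ha⟩ : B), (⟨b, hb⟩ : B)) ∉ (J.induce B).edgeSet := by
        simpa using hnadj
      have hset : (J'.induce B).edgeSet
          = insert s((⟨a, ha⟩ : B), (⟨b, hb⟩ : B)) (J.induce B).edgeSet := by
        ext e
        induction e using Sym2.ind with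
        | _ x y =>
          simp only [mem_edgeSet, Set.mem_insert_iff, hJ', comap_adj, Function.Embedding.coe_subtype,
            sup_adj, fromEdgeSet_adj, Set.mem_singleton_iff, Sym2.eq_iff,
            Subtype.ext_iff]
          constructor
          · rintro (h | ⟨(⟨h1, h2⟩ | ⟨h1, h2⟩), hne⟩)
            · exact Or.inr h
            · exact Or.inl (Or.inl ⟨h1, h2⟩)
            · exact Or.inl (Or.inr ⟨h1, h2⟩)
          · rintro ((⟨h1, h2⟩ | ⟨h1, h2⟩) | h)
            · exact Or.inr ⟨Or.inl ⟨h1, h2⟩, by rw [h1, h2]; exact hab⟩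
            · exact Or.inr ⟨Or.inr ⟨h1, h2⟩, by rw [h1, h2]; exact hab.symm⟩
            · exact Or.inl h
      rw [hset, Set.ncard_insert_of_notMem hnotmem (Set.toFinite _),
        ← heBdef]
    -- A ⊂ B since {a,b} ⊆ B but not ⊆ A
    have hss : A ⊂ B := by
      refine ⟨hAB, fun h => hnotA ?_⟩
      intro x hx
      rcases hx with rfl | hx
      · exact h ha
      · rcases hx with rfl
        exact h hb
    have hdkey := hdense B hss
    rw [scalingInd, hp, ← heBdef, ← heAdef, aux_rpow hn0] at hdkey
    have hkey := aux_key he hn _ _ hdkey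
    rw [scalingPair, scalingPair, heJ', hindJ', hp, ← heJdef, ← heAdef, ← hvv,
      Nat.add_sub_add_right, aux_rpow hn0, aux_rpow hn0, ← Real.rpow_add hn0]
    rw [Real.rpow_le_rpow_left_iff hn]
    rw [Nat.cast_sub hcBv, Nat.cast_sub hcAv, Nat.cast_sub heBJ,
      Nat.cast_sub heAJ]
    rw [Nat.cast_sub hcAB, Nat.cast_sub heAB] at hkey
    have hdiv : -(1:ℝ) / ((eH : ℝ) - 1) = -(1 / ((eH : ℝ) - 1)) := by ring
    rw [hdiv]
    linarith [hkey]
  · -- edge ab not inside B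
    have hgraph : J'.induce B = J.induce B := by
      ext x y
      simp only [hJ', comap_adj, Function.Embedding.coe_subtype, sup_adj, fromEdgeSet_adj,
        Set.mem_singleton_iff]
      constructor
      · rintro (h | ⟨hxy, -⟩)
        · exact h
        · exfalso
          apply hmem
          rcases Sym2.eq_iff.mp hxy with ⟨h1, h2⟩ | ⟨h1, h2⟩
          · exact ⟨h1 ▸ x.2, h2 ▸ y.2⟩
          · exact ⟨h2 ▸ y.2, h1 ▸ x.2⟩
      · exact Or.inl
    have hindJ' : (J'.induce B).edgeSet.ncard = eB := by rw [hgraph]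
    have hsub : eJ + 1 - eB = (eJ - eB) + 1 := by omega
    rw [scalingPair, scalingPair, heJ', hindJ', hp, ← heJdef, ← heAdef, ← hvv, hsub,
      aux_rpow hn0, aux_rpow hn0, ← Real.rpow_add hn0]
    rw [Real.rpow_le_rpow_left_iff hn]
    rw [Nat.cast_sub hcBv, Nat.cast_sub hcAv, Nat.cast_sub heAJ]
    push_cast
    rw [Nat.cast_sub hcAB, Nat.cast_sub heAB] at hkey0
    have hdiv : -(1:ℝ) / ((eH : ℝ) - 1) = -(1 / ((eH : ℝ) - 1)) := by ring
    rw [hdiv]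
    have hBJcast : ((eJ - eB : ℕ) : ℝ) = (eJ : ℝ) - eB := by
      rw [Nat.cast_sub heBJ]
    rw [hBJcast]
    nlinarith [hkey0, hc1, hcAB, heAB]
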